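/- arXiv:1812.01401 — 2 statements merged into one kernel-verified Lean document; each statement's English description precedes it below -/
import Mathlib

section
/- On the Scherk graph z = ln(cos y) - ln(cos x), the Gauss curvature satisfies the Finn–Osserman estimate √(−K) ≤ (1 + n₃²)/2, where n₃ = 1/√(1 + tan²x + tan²y) is the third component of the upward unit normal. -/
open Real

private lemma hasDerivAt_logcos {t : ℝ} (h : Real.cos t ≠ 0) :
    HasDerivAt (fun s => Real.log (Real.cos s)) (-Real.tan t) t := by
  have := (Real.hasDerivAt_cos t).log h
  simpa [Real.tan_eq_sin_div_cos, neg_div] using this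

private lemma key_ineq (a b : ℝ) (ha : 0 ≤ a) (hb : 0 ≤ b) :
    (1 + a) * (1 + b) / (1 + a + b) ^ 2 ≤ ((1 + 1 / (1 + a + b)) / 2) ^ 2 := by
  have hs : (0:ℝ) < 1 + a + b := by linarith
  rw [div_le_iff₀ (by positivity)]
  have h2 : ((1 + 1 / (1 + a + b)) / 2) ^ 2 * (1 + a + b) ^ 2 = (((1 + a + b) + 1) / 2) ^ 2 := by
    field_simp
  rw [h2]
  nlinarith [sq_nonneg (a - b)]

/-- On the Scherk graph `z = ln(cos y) - ln(cos x)`, the Gauss curvature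
satisfies the Finn–Osserman estimate `√(−K) ≤ (1 + n₃²)/2`, where
`n₃ = 1/√(1 + tan²x + tan²y)`. -/
theorem scherk_finn_osserman_estimate (x y : ℝ)
    (hx : x ∈ Set.Ioo (-(π/2)) (π/2)) (hy : y ∈ Set.Ioo (-(π/2)) (π/2))
    (F : ℝ → ℝ → ℝ) (hF : ∀ u v, F u v = Real.log (Real.cos v) - Real.log (Real.cos u))
    (Fx Fy Fxx Fyy Fxy K n₃ : ℝ)
    (hFx : Fx = deriv (fun t => F t y) x)
    (hFy : Fy = deriv (fun t => F x t) y)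
    (hFxx : Fxx = deriv (deriv (fun t => F t y)) x)
    (hFyy : Fyy = deriv (deriv (fun t => F x t)) y)
    (hFxy : Fxy = deriv (fun t => deriv (fun s => F t s) y) x)
    (hK : K = (Fxx * Fyy - Fxy ^ 2) / (1 + Fx ^ 2 + Fy ^ 2) ^ 2)
    (hn₃ : n₃ = 1 / Real.sqrt (1 + Real.tan x ^ 2 + Real.tan y ^ 2)) :
    Real.sqrt (-K) ≤ (1 + n₃ ^ 2) / 2 := by
  have hcx : 0 < Real.cos x := Real.cos_pos_of_mem_Ioo hx
  have hcy : 0 < Real.cos y := Real.cos_pos_of_mem_Ioo hy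
  -- function rewrites
  have hfx : (fun t => F t y) = fun t => Real.log (Real.cos y) - Real.log (Real.cos t) :=
    funext fun t => hF t y
  have hfy : (fun t => F x t) = fun t => Real.log (Real.cos t) - Real.log (Real.cos x) :=
    funext fun t => hF x t
  -- first derivatives
  have hdx : ∀ t : ℝ, Real.cos t ≠ 0 → deriv (fun s => F s y) t = Real.tan t := by
    intro t ht
    rw [hfx]
    have := ((hasDerivAt_const t (Real.log (Real.cos y))).sub (hasDerivAt_logcos ht)).deriv
    exact this.trans (by ring)
  have hdy : ∀ t : ℝ, Real.cos t ≠ 0 → deriv (fun s => F x s) t = -Real.tan t := by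
    intro t ht
    rw [hfy]
    have := ((hasDerivAt_logcos ht).sub (hasDerivAt_const t (Real.log (Real.cos x)))).deriv
    exact this.trans (by ring)
  have hFx' : Fx = Real.tan x := by rw [hFx, hdx x hcx.ne']
  have hFy' : Fy = -Real.tan y := by rw [hFy, hdy y hcy.ne']
  -- eventual equalities near x and y
  have hevx : ∀ᶠ t in nhds x, Real.cos t ≠ 0 :=
    Real.continuous_cos.continuousAt.eventually_ne hcx.ne'
  have hevy : ∀ᶠ t in nhds y, Real.cos t ≠ 0 :=
    Real.continuous_cos.continuousAt.eventually_ne hcy.ne'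
  have hex : deriv (fun s => F s y) =ᶠ[nhds x] fun t => Real.tan t :=
    hevx.mono fun t ht => hdx t ht
  have hey : deriv (fun s => F x s) =ᶠ[nhds y] fun t => -Real.tan t :=
    hevy.mono fun t ht => hdy t ht
  -- second derivatives
  have hFxx' : Fxx = 1 / Real.cos x ^ 2 := by
    rw [hFxx, hex.deriv_eq, (Real.hasDerivAt_tan hcx.ne').deriv]
  have hFyy' : Fyy = -(1 / Real.cos y ^ 2) := by
    rw [hFyy, hey.deriv_eq]
    have := ((Real.hasDerivAt_tan hcy.ne').neg).deriv
    simpa using this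
  have hFxy' : Fxy = 0 := by
    rw [hFxy]
    have : (fun t : ℝ => deriv (fun s => F t s) y) = fun _ => -Real.tan y := by
      funext t
      have hft : (fun s => F t s) = fun s => Real.log (Real.cos s) - Real.log (Real.cos t) :=
        funext fun s => hF t s
      rw [hft]
      have := ((hasDerivAt_logcos hcy.ne').sub
        (hasDerivAt_const y (Real.log (Real.cos t)))).deriv
      exact this.trans (by ring)
    rw [this, deriv_const]
  -- abbreviations
  set a := Real.tan x ^ 2 with ha
  set b := Real.tan y ^ 2 with hb
  have ha0 : 0 ≤ a := sq_nonneg _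
  have hb0 : 0 ≤ b := sq_nonneg _
  have hs : (0:ℝ) < 1 + a + b := by linarith
  have h1a : 1 / Real.cos x ^ 2 = 1 + a := by
    rw [ha, ← Real.inv_one_add_tan_sq hcx.ne', one_div, inv_inv]
  have h1b : 1 / Real.cos y ^ 2 = 1 + b := by
    rw [hb, ← Real.inv_one_add_tan_sq hcy.ne', one_div, inv_inv]
  have hK' : -K = (1 + a) * (1 + b) / (1 + a + b) ^ 2 := by
    rw [hK, hFxx', hFyy', hFxy', hFx', hFy', h1a, h1b]
    field_simp
    ring
  have hn : n₃ ^ 2 = 1 / (1 + a + b) := by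
    rw [hn₃, div_pow, one_pow, Real.sq_sqrt hs.le]
  have hRHS : (0:ℝ) ≤ (1 + n₃ ^ 2) / 2 := by
    have := sq_nonneg n₃; linarith
  have hkey : -K ≤ ((1 + n₃ ^ 2) / 2) ^ 2 := by
    rw [hK', hn]
    exact key_ineq a b ha0 hb0
  calc Real.sqrt (-K) ≤ Real.sqrt (((1 + n₃ ^ 2) / 2) ^ 2) := Real.sqrt_le_sqrt hkey
    _ = (1 + n₃ ^ 2) / 2 := Real.sqrt_sq hRHS
end

section
/- Let π⁻¹: ℂ → S² be inverse stereographic projection. For G, α ∈ ℂ with α ≠ 0, setting n = π⁻¹(G) and V = π⁻¹(α), one has 1 - ⟨n, V⟩² = (2|α|/(1 + |α|²))² · |G - α|² |G + 1/ᾱ|² / (1 + |G|²)². -/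
set_option maxHeartbeats 1000000

open scoped RealInnerProductSpace

/-- Inverse stereographic projection from the north pole. -/
noncomputable def invSter (w : ℂ) : EuclideanSpace ℝ (Fin 3) :=
  (‖w‖ ^ 2 + 1)⁻¹ •
    (WithLp.toLp 2 ![2 * w.re, 2 * w.im, ‖w‖ ^ 2 - 1] : EuclideanSpace ℝ (Fin 3))

/-- For `α ≠ 0`, with `n = π⁻¹(G)` and `V = π⁻¹(α)`,
`1 - ⟨n, V⟩² = (2|α|/(1 + |α|²))² · |G - α|² |G + 1/ᾱ|² / (1 + |G|²)²`. -/
theorem one_sub_inner_sq_invSter (G α : ℂ) (hα : α ≠ 0) :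
    1 - ⟪invSter G, invSter α⟫ ^ 2 =
      (2 * ‖α‖ / (1 + ‖α‖ ^ 2)) ^ 2 *
        (‖G - α‖ ^ 2 * ‖G + 1 / (starRingEnd ℂ) α‖ ^ 2) /
          (1 + ‖G‖ ^ 2) ^ 2 := by
  have hre : α.re ^ 2 + α.im ^ 2 ≠ 0 := by
    have : α.re ≠ 0 ∨ α.im ≠ 0 := by
      by_contra h
      push_neg at h
      exact hα (Complex.ext h.1 h.2)
    rcases this with h | h <;> positivity
  have hG1 : G.re ^ 2 + G.im ^ 2 + 1 ≠ 0 := by positivity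
  have hA1 : α.re ^ 2 + α.im ^ 2 + 1 ≠ 0 := by positivity
  have e0 : ∀ w : ℂ, invSter w 0 = (‖w‖ ^ 2 + 1)⁻¹ * (2 * w.re) := fun w => rfl
  have e1 : ∀ w : ℂ, invSter w 1 = (‖w‖ ^ 2 + 1)⁻¹ * (2 * w.im) := fun w => rfl
  have e2 : ∀ w : ℂ, invSter w 2 = (‖w‖ ^ 2 + 1)⁻¹ * (‖w‖ ^ 2 - 1) :=
    fun w => rfl
  have ht : ⟪invSter G, invSter α⟫ =
      (4 * (G.re * α.re + G.im * α.im) +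
        (G.re ^ 2 + G.im ^ 2 - 1) * (α.re ^ 2 + α.im ^ 2 - 1)) /
        ((G.re ^ 2 + G.im ^ 2 + 1) * (α.re ^ 2 + α.im ^ 2 + 1)) := by
    simp only [PiLp.inner_apply, Fin.sum_univ_three, RCLike.inner_apply, conj_trivial,
      e0, e1, e2, Complex.sq_norm, Complex.normSq_apply, ← pow_two]
    field_simp
    ring
  have hsub : 1 - ⟪invSter G, invSter α⟫ =
      2 * ‖G - α‖ ^ 2 /
        ((G.re ^ 2 + G.im ^ 2 + 1) * (α.re ^ 2 + α.im ^ 2 + 1)) := by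
    rw [ht, Complex.sq_norm, Complex.normSq_sub]
    simp only [Complex.normSq_apply, Complex.mul_re, Complex.conj_re, Complex.conj_im, ← pow_two]
    field_simp
    ring
  have habs : ‖G + 1 / (starRingEnd ℂ) α‖ ^ 2 =
      (1 + (G.re * α.re + G.im * α.im)) ^ 2 / (α.re ^ 2 + α.im ^ 2) +
        (G.im * α.re - G.re * α.im) ^ 2 / (α.re ^ 2 + α.im ^ 2) := by
    rw [Complex.sq_norm]
    simp only [Complex.normSq_apply, Complex.add_re, Complex.add_im, one_div, map_inv₀,
      Complex.inv_re, Complex.inv_im, Complex.normSq_conj, Complex.conj_re, Complex.conj_im,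
      Complex.normSq_apply, Complex.neg_re, Complex.neg_im, ← pow_two]
    field_simp
    ring
  have hadd : 1 + ⟪invSter G, invSter α⟫ =
      2 * ((1 + (G.re * α.re + G.im * α.im)) ^ 2 + (G.im * α.re - G.re * α.im) ^ 2) /
        ((G.re ^ 2 + G.im ^ 2 + 1) * (α.re ^ 2 + α.im ^ 2 + 1)) := by
    rw [ht]
    field_simp
    ring
  have key : 1 - ⟪invSter G, invSter α⟫ ^ 2 =
      (1 - ⟪invSter G, invSter α⟫) * (1 + ⟪invSter G, invSter α⟫) := by ring
  rw [key, hsub, hadd, habs]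
  have habsG : ‖G‖ ^ 2 = G.re ^ 2 + G.im ^ 2 := by
    rw [Complex.sq_norm, Complex.normSq_apply]; ring
  have habsA : ‖α‖ ^ 2 = α.re ^ 2 + α.im ^ 2 := by
    rw [Complex.sq_norm, Complex.normSq_apply]; ring
  have habsGA : ‖G - α‖ ^ 2 =
      (G.re - α.re) ^ 2 + (G.im - α.im) ^ 2 := by
    rw [Complex.sq_norm, Complex.normSq_apply, Complex.sub_re, Complex.sub_im]; ring
  rw [div_pow, mul_pow, habsG, habsA, habsGA]
  field_simp
  ring
end
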